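/- Let (a, b) be a pair of Δ_C-valued random vectors with E[a | b] = (M^0)'b almost surely, where M^0 is a row-stochastic C×C matrix with all entries strictly positive, and suppose that for every i ∈ {1,…,C} and every ε > 0, P(b_i ≥ 1 − ε) > 0 (Assumption 1). Then M^0 is the unique minimizer of the population labeled loss: for every row-stochastic C×C matrix M with M ≠ M^0, E[D_KL(a ‖ M'b)] > E[D_KL(a ‖ (M^0)'b)], as elements of [0,∞]. -/

import Mathlib

open MeasureTheory ProbabilityTheory Filter Finset
open scoped ENNReal NNReal BigOperators

noncomputable section

namespace GBQL

/-- The probability simplex Δ_C in ℝ^C. -/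
def simplex (C : ℕ) : Set (Fin C → ℝ) :=
  {x | (∀ i, 0 ≤ x i) ∧ ∑ i, x i = 1}

/-- A C×C matrix (as a function) is row-stochastic. -/
def rowStochastic {C : ℕ} (M : Fin C → Fin C → ℝ) : Prop :=
  (∀ i j, 0 ≤ M i j) ∧ ∀ i, ∑ j, M i j = 1

/-- M' x, the transpose of M applied to x : (M'x)_j = Σ_i M_{ij} x_i. -/
def mtv {C : ℕ} (M : Fin C → Fin C → ℝ) (x : Fin C → ℝ) : Fin C → ℝ :=
  fun j => ∑ i, M i j * x i

open scoped Classical in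
/-- Kullback–Leibler divergence D_KL(p‖q) = Σ_j p_j log(p_j/q_j) as an element of [0,∞],
with conventions 0·log(0/x) = 0 and p_j log(p_j/0) = ∞ for p_j > 0. -/
def klDiv {C : ℕ} (p q : Fin C → ℝ) : ℝ≥0∞ :=
  if ∃ j, 0 < p j ∧ q j = 0 then ⊤
  else ENNReal.ofReal (∑ j, if p j = 0 then 0 else p j * Real.log (p j / q j))

/-- Real-valued Kullback–Leibler divergence (agreeing with `klDiv` whenever `q` has
strictly positive entries). -/
def klReal {C : ℕ} (p q : Fin C → ℝ) : ℝ :=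
  ∑ j, if p j = 0 then 0 else p j * Real.log (p j / q j)

/-- Completion of a C×(C−1) matrix M̃ to a C×C matrix M with M_{iC} = 1 − Σ_{j<C} M_{ij}. -/
def completeM {c : ℕ} (Mt : Fin (c+1) → Fin c → ℝ) : Fin (c+1) → Fin (c+1) → ℝ :=
  fun i j => if h : (j : ℕ) < c then Mt i ⟨j, h⟩ else 1 - ∑ k, Mt i k

/-- Completion of p̃ ∈ ℝ^{C−1} to p ∈ ℝ^C with p_C = 1 − Σ_{i<C} p_i. -/
def completeV {c : ℕ} (pt : Fin c → ℝ) : Fin (c+1) → ℝ :=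
  fun i => if h : (i : ℕ) < c then pt ⟨i, h⟩ else 1 - ∑ k, pt k

/-- The first C−1 columns of a C×C matrix. -/
def truncM {c : ℕ} (M : Fin (c+1) → Fin (c+1) → ℝ) : Fin (c+1) → Fin c → ℝ :=
  fun i j => M i (Fin.castSucc j)

/-- The first C−1 coordinates of a vector in ℝ^C. -/
def truncV {c : ℕ} (p : Fin (c+1) → ℝ) : Fin c → ℝ := fun i => p (Fin.castSucc i)

/-- The parameter space: θ = (M̃, p̃). -/
abbrev Param (c : ℕ) := (Fin (c+1) → Fin c → ℝ) × (Fin c → ℝ)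

/-- S_d = {x ∈ ℝ^d : x_i ≥ 0, Σ_i x_i ≤ 1}. -/
def Sset (d : ℕ) : Set (Fin d → ℝ) := {x | (∀ i, 0 ≤ x i) ∧ ∑ i, x i ≤ 1}

/-- Θ = (S_{C−1})^C × S_{C−1}. -/
def Theta (c : ℕ) : Set (Param c) := {θ | (∀ i, θ.1 i ∈ Sset c) ∧ θ.2 ∈ Sset c}

/-- ℓ1 distance on the concatenated coordinates of θ. -/
def l1dist {c : ℕ} (θ θ' : Param c) : ℝ :=
  (∑ i, ∑ j, |θ.1 i j - θ'.1 i j|) + ∑ i, |θ.2 i - θ'.2 i|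

/-- The empirical loss f_N(θ), valued in [0,∞]. -/
def fN {c : ℕ} (N n : ℕ) (aU aL bL : ℕ → Fin (c+1) → ℝ) (θ : Param c) : ℝ≥0∞ :=
  ((∑ r ∈ Finset.range N, klDiv (aU r) (mtv (completeM θ.1) (completeV θ.2))) +
    ∑ r ∈ Finset.range n, klDiv (aL r) (mtv (completeM θ.1) (bL r))) / (N : ℝ≥0∞)

/-- The empirical loss f_N(θ), real-valued version (valid near interior points). -/
def fNreal {c : ℕ} (N n : ℕ) (aU aL bL : ℕ → Fin (c+1) → ℝ) (θ : Param c) : ℝ :=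
  ((∑ r ∈ Finset.range N, klReal (aU r) (mtv (completeM θ.1) (completeV θ.2))) +
    ∑ r ∈ Finset.range n, klReal (aL r) (mtv (completeM θ.1) (bL r))) / (N : ℝ)

/-- exp(−x) for x ∈ [0,∞], with exp(−∞) = 0. -/
def expNeg (x : ℝ≥0∞) : ℝ≥0∞ :=
  if x = ⊤ then 0 else ENNReal.ofReal (Real.exp (-x.toReal))

/-- The extended logarithm [0,∞] → [−∞,∞]. -/
def elog (x : ℝ≥0∞) : EReal :=
  if x = 0 then ⊥ else if x = ⊤ then ⊤ else ((Real.log x.toReal : ℝ) : EReal)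

/-- Index set for the coordinates of θ = (M̃, p̃): pairs (i,j) for M̃ entries and i for p̃. -/
abbrev Idx (c : ℕ) := (Fin (c+1) × Fin c) ⊕ Fin c

/-- Coordinates of θ as a vector indexed by `Idx c`. -/
def vecParam {c : ℕ} (θ : Param c) : Idx c → ℝ :=
  Sum.elim (fun ij => θ.1 ij.1 ij.2) (fun i => θ.2 i)

/-- Standard basis vectors of the parameter space, indexed by `Idx c`. -/
def basisP (c : ℕ) : Idx c → Param c :=
  Sum.elim (fun ij => (fun i j => if i = ij.1 ∧ j = ij.2 then 1 else 0, 0))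
    (fun i0 => (0, fun i => if i = i0 then 1 else 0))



/-- Per-term Gibbs bound: p * log (q / p) ≤ q - p for p ≥ 0, q ≥ 0. -/
lemma term_le {p q : ℝ} (hp : 0 ≤ p) (hq : 0 ≤ q) (hpq : 0 < p → 0 < q) :
    p * Real.log (q / p) ≤ q - p := by
  rcases eq_or_lt_of_le hp with h | h
  · simp [← h, hq]
  have h' : 0 < q := hpq h
  have hx : 0 < q / p := div_pos h' h
  have := Real.log_le_sub_one_of_pos hx
  have h2 : p * Real.log (q / p) ≤ p * (q / p - 1) := by nlinarith
  calc p * Real.log (q / p) ≤ p * (q / p - 1) := h2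
    _ = q - p := by field_simp

/-- Gibbs inequality for finite distributions. -/
lemma log_flip {p q : ℝ} : Real.log (p / q) = -Real.log (q / p) := by
  rw [← Real.log_inv, inv_div]

lemma gibbs_nonneg {C : ℕ} {p q : Fin C → ℝ} (hp : ∀ j, 0 ≤ p j) (hq : ∀ j, 0 ≤ q j)
    (hpq : ∀ j, 0 < p j → 0 < q j)
    (hps : ∑ j, p j = 1) (hqs : ∑ j, q j = 1) :
    0 ≤ ∑ j, p j * Real.log (p j / q j) := by
  have key : ∑ j, p j * Real.log (q j / p j) ≤ 0 := by
    calc ∑ j, p j * Real.log (q j / p j) ≤ ∑ j, (q j - p j) :=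
          Finset.sum_le_sum fun j _ => term_le (hp j) (hq j) (hpq j)
      _ = 0 := by rw [Finset.sum_sub_distrib, hps, hqs]; ring
  have : ∑ j, p j * Real.log (p j / q j) = - ∑ j, p j * Real.log (q j / p j) := by
    rw [← Finset.sum_neg_distrib]
    refine Finset.sum_congr rfl fun j _ => ?_
    rw [log_flip]; ring
  rw [this]; linarith

/-- Equality case of Gibbs: if the KL sum is ≤ 0 (with q strictly positive), then p = q. -/
lemma gibbs_eq {C : ℕ} {p q : Fin C → ℝ} (hp : ∀ j, 0 ≤ p j) (hq : ∀ j, 0 < q j)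
    (hps : ∑ j, p j = 1) (hqs : ∑ j, q j = 1)
    (h : ∑ j, p j * Real.log (p j / q j) ≤ 0) : p = q := by
  have hneg : ∑ j, p j * Real.log (p j / q j) = - ∑ j, p j * Real.log (q j / p j) := by
    rw [← Finset.sum_neg_distrib]
    refine Finset.sum_congr rfl fun j _ => ?_
    rw [log_flip]; ring
  have hsum0 : ∑ j, (q j - p j - p j * Real.log (q j / p j)) = 
      - ∑ j, p j * Real.log (q j / p j) := by
    rw [Finset.sum_sub_distrib, Finset.sum_sub_distrib, hps, hqs]; ring
  have hterm : ∀ j ∈ Finset.univ, 0 ≤ q j - p j - p j * Real.log (q j / p j) :=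
    fun j _ => by have := term_le (hp j) (hq j).le (fun _ => hq j); linarith
  have hsle : ∑ j, (q j - p j - p j * Real.log (q j / p j)) ≤ 0 := by
    rw [hsum0]; rw [hneg] at h; linarith
  have hzero : ∀ j ∈ Finset.univ, q j - p j - p j * Real.log (q j / p j) = 0 := by
    rw [← Finset.sum_eq_zero_iff_of_nonneg hterm]
    exact le_antisymm hsle (Finset.sum_nonneg hterm)
  funext j
  have hj := hzero j (Finset.mem_univ j)
  rcases eq_or_lt_of_le (hp j) with h' | h'
  · exfalso; rw [← h'] at hj; simp at hj; exact (hq j).ne' hj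
  by_contra hne
  have hx : (0:ℝ) < q j / p j := div_pos (hq j) h'
  have hx1 : q j / p j ≠ 1 := by
    intro h1; exact hne ((div_eq_one_iff_eq h'.ne').mp h1).symm
  have := Real.log_lt_sub_one_of_pos hx hx1
  have h2 : p j * Real.log (q j / p j) < p j * (q j / p j - 1) := by
    exact mul_lt_mul_of_pos_left this h'
  have h3 : p j * (q j / p j - 1) = q j - p j := by field_simp
  linarith


lemma entry_le_one {C : ℕ} {M : Fin C → Fin C → ℝ} (hM : rowStochastic M) (i j : Fin C) :
    M i j ≤ 1 := by
  have := Finset.single_le_sum (f := fun k => M i k) (fun k _ => hM.1 i k) (Finset.mem_univ j)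
  rw [hM.2 i] at this
  exact this

lemma matrix_eq_of_vertex {C : ℕ} {M M0 : Fin C → Fin C → ℝ}
    (hM : rowStochastic M) (hM0 : rowStochastic M0)
    (h : ∀ i : Fin C, ∀ ε > (0:ℝ), ∃ x ∈ simplex C, 1 - ε ≤ x i ∧ mtv M x = mtv M0 x) :
    M = M0 := by
  funext i j
  have key : ∀ ε > (0:ℝ), ε ≤ 1/2 → |M i j - M0 i j| ≤ 4 * ε := by
    intro ε hε hε2
    obtain ⟨x, hx, hxi, heq⟩ := h i ε hε
    have hsum : ∑ k, (M k j - M0 k j) * x k = 0 := by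
      have := congrFun heq j
      simp only [mtv] at this
      have : ∑ k, M k j * x k - ∑ k, M0 k j * x k = 0 := by rw [this]; ring
      rw [← Finset.sum_sub_distrib] at this
      convert this using 2 with k
      ring
    have hxk : ∀ k, 0 ≤ x k := hx.1
    have hxs : ∑ k, x k = 1 := hx.2
    have herase : ∑ k ∈ Finset.univ.erase i, (M k j - M0 k j) * x k
        = - ((M i j - M0 i j) * x i) := by
      have := Finset.sum_erase_eq_sub (f := fun k => (M k j - M0 k j) * x k)
        (Finset.mem_univ i)
      rw [this, hsum]; ring
    have hxe : ∑ k ∈ Finset.univ.erase i, x k = 1 - x i := by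
      rw [Finset.sum_erase_eq_sub (Finset.mem_univ i), hxs]
    have hb : |(M i j - M0 i j) * x i| ≤ 2 * (1 - x i) := by
      rw [← abs_neg, ← herase]
      calc |∑ k ∈ Finset.univ.erase i, (M k j - M0 k j) * x k|
          ≤ ∑ k ∈ Finset.univ.erase i, |(M k j - M0 k j) * x k| :=
            Finset.abs_sum_le_sum_abs _ _
        _ ≤ ∑ k ∈ Finset.univ.erase i, 2 * x k := by
            refine Finset.sum_le_sum fun k _ => ?_
            rw [abs_mul, abs_of_nonneg (hxk k)]
            have h1 : |M k j - M0 k j| ≤ 2 := by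
              have := entry_le_one hM k j
              have := entry_le_one hM0 k j
              have := hM.1 k j
              have := hM0.1 k j
              rw [abs_le]; constructor <;> linarith
            nlinarith [hxk k]
        _ = 2 * (1 - x i) := by rw [← Finset.mul_sum, hxe]
    have hxi' : (1:ℝ)/2 ≤ x i := by linarith
    have hxi0 : 0 ≤ x i := hxk i
    rw [abs_mul, abs_of_nonneg hxi0] at hb
    nlinarith [abs_nonneg (M i j - M0 i j)]
  by_contra hne
  have habs : 0 < |M i j - M0 i j| := abs_pos.mpr (sub_ne_zero.mpr hne)
  set ε := min (1/2 : ℝ) (|M i j - M0 i j| / 8) with hεdef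
  have hε : 0 < ε := lt_min (by norm_num) (by positivity)
  have := key ε hε (min_le_left _ _)
  have h8 : ε ≤ |M i j - M0 i j| / 8 := min_le_right _ _
  linarith

lemma klReal_eq_sum {C : ℕ} (p q : Fin C → ℝ) :
    klReal p q = ∑ j, p j * Real.log (p j / q j) := by
  unfold klReal
  refine Finset.sum_congr rfl fun j _ => ?_
  split_ifs with h
  · simp [h]
  · rfl

lemma klDiv_of_no_zero {C : ℕ} {p q : Fin C → ℝ} (h : ¬ ∃ j, 0 < p j ∧ q j = 0) :
    klDiv p q = ENNReal.ofReal (klReal p q) := by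
  classical
  simp only [klDiv, klReal]
  rw [if_neg h]

lemma klDiv_of_top {C : ℕ} {p q : Fin C → ℝ} (h : ∃ j, 0 < p j ∧ q j = 0) :
    klDiv p q = ⊤ := by
  classical
  simp only [klDiv]
  rw [if_pos h]

lemma mtv_sum {C : ℕ} {M : Fin C → Fin C → ℝ} (hM : rowStochastic M) {x : Fin C → ℝ}
    (hx : ∑ i, x i = 1) : ∑ j, mtv M x j = 1 := by
  unfold mtv
  rw [Finset.sum_comm]
  calc ∑ i, ∑ j, M i j * x i = ∑ i, (∑ j, M i j) * x i := by
        refine Finset.sum_congr rfl fun i _ => ?_; rw [Finset.sum_mul]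
    _ = ∑ i, x i := by
        refine Finset.sum_congr rfl fun i _ => ?_; rw [hM.2 i, one_mul]
    _ = 1 := hx

lemma mtv_nonneg {C : ℕ} {M : Fin C → Fin C → ℝ} (hM : rowStochastic M) {x : Fin C → ℝ}
    (hx : ∀ i, 0 ≤ x i) (j : Fin C) : 0 ≤ mtv M x j :=
  Finset.sum_nonneg fun i _ => mul_nonneg (hM.1 i j) (hx i)

lemma mtv_le_one {C : ℕ} {M : Fin C → Fin C → ℝ} (hM : rowStochastic M) {x : Fin C → ℝ}
    (hx : x ∈ simplex C) (j : Fin C) : mtv M x j ≤ 1 := by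
  calc mtv M x j ≤ ∑ i, x i := by
        refine Finset.sum_le_sum fun i _ => ?_
        have := entry_le_one hM i j
        nlinarith [hx.1 i]
    _ = 1 := hx.2

lemma mtv_ge_delta {C : ℕ} {M : Fin C → Fin C → ℝ} {δ : ℝ} (hδ : ∀ i j, δ ≤ M i j)
    {x : Fin C → ℝ} (hx : x ∈ simplex C) (j : Fin C) : δ ≤ mtv M x j := by
  calc δ = ∑ i, δ * x i := by rw [← Finset.mul_sum, hx.2, mul_one]
    _ ≤ mtv M x j := Finset.sum_le_sum fun i _ => mul_le_mul_of_nonneg_right (hδ i j) (hx.1 i)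

lemma measurable_mtv_comp {C : ℕ} {Ωs : Type*} [MeasurableSpace Ωs] (M : Fin C → Fin C → ℝ)
    {b : Ωs → Fin C → ℝ} (hb : Measurable b) (j : Fin C) :
    Measurable (fun ω => mtv M (b ω) j) := by
  unfold mtv
  exact Finset.measurable_sum _ fun i _ =>
    (measurable_const.mul ((measurable_pi_apply i).comp hb))

lemma measurable_klReal_comp {C : ℕ} {Ωs : Type*} [MeasurableSpace Ωs]
    {p : Ωs → Fin C → ℝ} {q : Ωs → Fin C → ℝ}
    (hp : Measurable p) (hq : ∀ j, Measurable (fun ω => q ω j)) :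
    Measurable (fun ω => klReal (p ω) (q ω)) := by
  unfold klReal
  refine Finset.measurable_sum _ fun j _ => ?_
  have hpj : Measurable fun ω => p ω j := (measurable_pi_apply j).comp hp
  have hset : MeasurableSet {ω | p ω j = 0} := hpj (measurableSet_singleton 0)
  exact Measurable.ite hset measurable_const
    (hpj.mul (Real.measurable_log.comp (hpj.div (hq j))))

/-- entropy-type lower bound : for a ∈ [0,1], a * log a ≥ -1 . -/
lemma mul_log_ge_neg_one {x : ℝ} (h0 : 0 ≤ x) (h1 : x ≤ 1) : -1 ≤ x * Real.log x := by
  rcases eq_or_lt_of_le h0 with h | h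
  · simp [← h]
  have := Real.log_le_sub_one_of_pos (show (0:ℝ) < x⁻¹ by positivity)
  rw [Real.log_inv] at this
  have hx : x * Real.log x ≥ x * (1 - x⁻¹) := by nlinarith
  have : x * (1 - x⁻¹) = x - 1 := by field_simp
  linarith [hx, this]

lemma comap_stronglyMeasurable {Ωs α : Type*} [MeasurableSpace α] {b : Ωs → α} {ψ : α → ℝ}
    (hψ : Measurable ψ) :
    StronglyMeasurable[MeasurableSpace.comap b inferInstance] (fun ω => ψ (b ω)) := by
  have hb : Measurable[MeasurableSpace.comap b inferInstance] b :=
    measurable_iff_comap_le.mpr le_rfl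
  exact (hψ.comp hb).stronglyMeasurable

lemma comap_measurableSet {Ωs α : Type*} [MeasurableSpace α] {b : Ωs → α} {T : Set α}
    (hT : MeasurableSet T) :
    MeasurableSet[MeasurableSpace.comap b inferInstance] (b ⁻¹' T) := ⟨T, hT, rfl⟩

/-- Conditional-expectation transfer: if `μ[f|σ(b)] =ᵐ r` and `ψ (b ·)` is `σ(b)`-measurable,
then `∫ ψ(b)·f = ∫ ψ(b)·r` and `ψ(b)·r` is integrable. -/
lemma condexp_transfer {Ωs α : Type*} [MeasurableSpace Ωs] [MeasurableSpace α]
    (μ : Measure Ωs) [IsProbabilityMeasure μ] {b : Ωs → α} (hb : Measurable b)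
    {f r : Ωs → ℝ} {ψ : α → ℝ} (hψ : Measurable ψ)
    (hint : Integrable (fun ω => ψ (b ω) * f ω) μ) (hf : Integrable f μ)
    (hcond : μ[f|MeasurableSpace.comap b inferInstance] =ᵐ[μ] r) :
    Integrable (fun ω => ψ (b ω) * r ω) μ ∧
      ∫ ω, ψ (b ω) * f ω ∂μ = ∫ ω, ψ (b ω) * r ω ∂μ := by
  have hm := hb.comap_le
  haveI : SigmaFinite (μ.trim hm) := by
    haveI : IsFiniteMeasure (μ.trim hm) := by
      constructor
      rw [MeasureTheory.trim_measurableSet_eq hm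
        (@MeasurableSet.univ _ (MeasurableSpace.comap b inferInstance))]
      exact measure_lt_top μ _
    infer_instance
  have hg : StronglyMeasurable[MeasurableSpace.comap b inferInstance] (fun ω => ψ (b ω)) :=
    comap_stronglyMeasurable hψ
  have hmul := condExp_mul_of_stronglyMeasurable_left (μ := μ) hg
    (show Integrable ((fun ω => ψ (b ω)) * f) μ from hint) hf
  have hmul' : μ[(fun ω => ψ (b ω)) * f|MeasurableSpace.comap b inferInstance]
      =ᵐ[μ] fun ω => ψ (b ω) * r ω := by
    filter_upwards [hmul, hcond] with ω h1 h2
    rw [h1]; simp only [Pi.mul_apply, h2]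
  constructor
  · exact (integrable_condExp (f := (fun ω => ψ (b ω)) * f)).congr hmul'
  · have h1 : ∫ ω, ψ (b ω) * f ω ∂μ
        = ∫ ω, (μ[(fun ω => ψ (b ω)) * f|MeasurableSpace.comap b inferInstance]) ω ∂μ :=
      (integral_condExp hm).symm
    rw [h1]
    exact integral_congr_ae hmul'

/-- Set-integral version of conditional-expectation transfer over `σ(b)`-measurable sets. -/
lemma condexp_set_transfer {Ωs α : Type*} [MeasurableSpace Ωs] [MeasurableSpace α]
    (μ : Measure Ωs) [IsProbabilityMeasure μ] {b : Ωs → α} (hb : Measurable b)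
    {f r : Ωs → ℝ} (hf : Integrable f μ) {T : Set α} (hT : MeasurableSet T)
    (hcond : μ[f|MeasurableSpace.comap b inferInstance] =ᵐ[μ] r) :
    ∫ ω in b ⁻¹' T, f ω ∂μ = ∫ ω in b ⁻¹' T, r ω ∂μ := by
  have hm := hb.comap_le
  haveI : SigmaFinite (μ.trim hm) := by
    haveI : IsFiniteMeasure (μ.trim hm) := by
      constructor
      rw [MeasureTheory.trim_measurableSet_eq hm
        (@MeasurableSet.univ _ (MeasurableSpace.comap b inferInstance))]
      exact measure_lt_top μ _
    infer_instance
  rw [← setIntegral_condExp hm hf (comap_measurableSet hT)]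
  exact setIntegral_congr_ae (hb hT) (hcond.mono fun ω h _ => h)

/-- under E[a|b] = (M⁰)'b a.s. (M⁰ row-stochastic, strictly positive entries) and
Assumption 1 (positivity) on b, M⁰ is the unique minimizer of the population labeled loss:
for every row-stochastic M ≠ M⁰, E[D_KL(a ‖ M'b)] > E[D_KL(a ‖ (M⁰)'b)] in [0,∞]. -/
theorem stmt5 {Ωs : Type*} [MeasurableSpace Ωs] (μ : Measure Ωs) [IsProbabilityMeasure μ]
    {C : ℕ} (hC : 2 ≤ C)
    (a b : Ωs → Fin C → ℝ) (ha_meas : Measurable a) (hb_meas : Measurable b)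
    (ha_simplex : ∀ ω, a ω ∈ simplex C) (hb_simplex : ∀ ω, b ω ∈ simplex C)
    (M0 : Fin C → Fin C → ℝ) (hM0 : rowStochastic M0) (hM0pos : ∀ i j, 0 < M0 i j)
    (hcond : ∀ j, μ[(fun ω => a ω j) | MeasurableSpace.comap b inferInstance]
      =ᵐ[μ] fun ω => mtv M0 (b ω) j)
    (hpos : ∀ i : Fin C, ∀ ε > (0 : ℝ), 0 < μ {ω | 1 - ε ≤ b ω i})
    (M : Fin C → Fin C → ℝ) (hM : rowStochastic M) (hMne : M ≠ M0) :
    ∫⁻ ω, klDiv (a ω) (mtv M0 (b ω)) ∂μ < ∫⁻ ω, klDiv (a ω) (mtv M (b ω)) ∂μ := by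
  classical
  have hCpos : 0 < C := lt_of_lt_of_le (by norm_num) hC
  -- uniform lower bound on M0 entries
  obtain ⟨δ, hδpos, hδle⟩ : ∃ δ : ℝ, 0 < δ ∧ ∀ i j, δ ≤ M0 i j := by
    obtain ⟨p, -, hp⟩ := Finset.exists_min_image (Finset.univ : Finset (Fin C × Fin C))
      (fun p => M0 p.1 p.2) ⟨(⟨0, hCpos⟩, ⟨0, hCpos⟩), Finset.mem_univ _⟩
    exact ⟨M0 p.1 p.2, hM0pos p.1 p.2, fun i j => hp (i, j) (Finset.mem_univ _)⟩
  have hδ1 : δ ≤ 1 := le_trans (hδle ⟨0, hCpos⟩ ⟨0, hCpos⟩) (entry_le_one hM0 _ _)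
  -- abbreviations
  set q0 : Ωs → Fin C → ℝ := fun ω => mtv M0 (b ω) with hq0def
  set q1 : Ωs → Fin C → ℝ := fun ω => mtv M (b ω) with hq1def
  show ∫⁻ ω, klDiv (a ω) (q0 ω) ∂μ < ∫⁻ ω, klDiv (a ω) (q1 ω) ∂μ
  have haj : ∀ j, Measurable fun ω => a ω j := fun j => (measurable_pi_apply j).comp ha_meas
  have hq0m : ∀ j, Measurable fun ω => q0 ω j := fun j => measurable_mtv_comp M0 hb_meas j
  have hq1m : ∀ j, Measurable fun ω => q1 ω j := fun j => measurable_mtv_comp M hb_meas j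
  have hq0ge : ∀ ω j, δ ≤ q0 ω j := fun ω j => mtv_ge_delta hδle (hb_simplex ω) j
  have hq0pos : ∀ ω j, 0 < q0 ω j := fun ω j => lt_of_lt_of_le hδpos (hq0ge ω j)
  have hq0le : ∀ ω j, q0 ω j ≤ 1 := fun ω j => mtv_le_one hM0 (hb_simplex ω) j
  have hq1nn : ∀ ω j, 0 ≤ q1 ω j := fun ω j => mtv_nonneg hM (hb_simplex ω).1 j
  have hq1le : ∀ ω j, q1 ω j ≤ 1 := fun ω j => mtv_le_one hM (hb_simplex ω) j
  have hq0sum : ∀ ω, ∑ j, q0 ω j = 1 := fun ω => mtv_sum hM0 (hb_simplex ω).2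
  have hq1sum : ∀ ω, ∑ j, q1 ω j = 1 := fun ω => mtv_sum hM (hb_simplex ω).2
  have ha0 : ∀ ω j, 0 ≤ a ω j := fun ω j => (ha_simplex ω).1 j
  have ha1 : ∀ ω j, a ω j ≤ 1 := fun ω j => by
    have h := Finset.single_le_sum (f := fun k => a ω k) (fun k _ => ha0 ω k) (Finset.mem_univ j)
    rwa [(ha_simplex ω).2] at h
  set F : Ωs → ℝ := fun ω => klReal (a ω) (q0 ω) with hFdef
  set G : Ωs → ℝ := fun ω => klReal (a ω) (q1 ω) with hGdef
  have hFmeas : Measurable F := measurable_klReal_comp ha_meas hq0m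
  have hGmeas : Measurable G := measurable_klReal_comp ha_meas hq1m
  have hF0 : ∀ ω, 0 ≤ F ω := fun ω => by
    have h := gibbs_nonneg (ha0 ω) (fun j => (hq0pos ω j).le) (fun j _ => hq0pos ω j)
      (ha_simplex ω).2 (hq0sum ω)
    rwa [← klReal_eq_sum] at h
  set Blog : ℝ := -Real.log δ with hBdef
  have hBnn : 0 ≤ Blog := by
    have := Real.log_nonpos hδpos.le hδ1
    simp [hBdef]; linarith
  have hFle : ∀ ω, F ω ≤ C * Blog := by
    intro ω
    have hterm : ∀ j, (if a ω j = 0 then (0:ℝ) else a ω j * Real.log (a ω j / q0 ω j)) ≤ Blog := by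
      intro j
      split_ifs with h
      · exact hBnn
      have hpj : 0 < a ω j := lt_of_le_of_ne (ha0 ω j) (Ne.symm h)
      rw [Real.log_div hpj.ne' (hq0pos ω j).ne']
      have hla : Real.log (a ω j) ≤ 0 := Real.log_nonpos hpj.le (ha1 ω j)
      have hlq : Real.log δ ≤ Real.log (q0 ω j) := Real.log_le_log hδpos (hq0ge ω j)
      have hlq0 : Real.log (q0 ω j) ≤ 0 := Real.log_nonpos (hq0pos ω j).le (hq0le ω j)
      have h1 : a ω j * (Real.log (a ω j) - Real.log (q0 ω j))
          ≤ a ω j * (-Real.log (q0 ω j)) := by nlinarith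
      have h2 : a ω j * (-Real.log (q0 ω j)) ≤ 1 * (-Real.log (q0 ω j)) := by
        apply mul_le_mul_of_nonneg_right (ha1 ω j); linarith
      simp only [hBdef]; linarith
    calc F ω ≤ ∑ _j : Fin C, Blog := Finset.sum_le_sum fun j _ => hterm j
      _ = C * Blog := by
        rw [Finset.sum_const, Finset.card_univ, Fintype.card_fin, nsmul_eq_mul]
  have hFint : Integrable F μ := by
    refine Integrable.mono' (integrable_const (C * Blog)) hFmeas.aestronglyMeasurable ?_
    filter_upwards with ω
    rw [Real.norm_eq_abs, abs_of_nonneg (hF0 ω)]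
    exact hFle ω
  -- LHS lintegral
  have hfpt : ∀ ω, klDiv (a ω) (q0 ω) = ENNReal.ofReal (F ω) := fun ω =>
    klDiv_of_no_zero (by push_neg; intro j hj; exact (hq0pos ω j).ne')
  have hlf : ∫⁻ ω, klDiv (a ω) (q0 ω) ∂μ = ENNReal.ofReal (∫ ω, F ω ∂μ) := by
    rw [ofReal_integral_eq_lintegral_ofReal hFint (Eventually.of_forall hF0)]
    exact lintegral_congr fun ω => hfpt ω
  -- Case A : RHS infinite
  by_cases htop : ∫⁻ ω, klDiv (a ω) (q1 ω) ∂μ = ⊤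
  · rw [hlf, htop]; exact ENNReal.ofReal_lt_top
  -- Case B
  -- the bad set N is null
  set NN : Set Ωs := ⋃ j, ({ω | 0 < a ω j} ∩ {ω | q1 ω j = 0}) with hNNdef
  have hNNmeas : MeasurableSet NN := MeasurableSet.iUnion fun j =>
    ((haj j) measurableSet_Ioi).inter ((hq1m j) (measurableSet_singleton 0))
  have hmemNN : ∀ ω, ω ∈ NN ↔ ∃ j, 0 < a ω j ∧ q1 ω j = 0 := by
    intro ω; simp [hNNdef, Set.mem_iUnion]
  have hNNnull : μ NN = 0 := by
    by_contra hne
    apply htop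
    have h1 : ∫⁻ ω in NN, klDiv (a ω) (q1 ω) ∂μ = ⊤ := by
      rw [setLIntegral_congr_fun hNNmeas (fun ω hω =>
        klDiv_of_top ((hmemNN ω).mp hω)), setLIntegral_const, ENNReal.top_mul hne]
    have h2 := lintegral_mono' (μ := μ.restrict NN) (ν := μ) Measure.restrict_le_self
      (le_refl fun ω => klDiv (a ω) (q1 ω))
    rw [h1] at h2
    exact top_le_iff.mp h2
  have haeN : ∀ᵐ ω ∂μ, ∀ j, 0 < a ω j → 0 < q1 ω j := by
    have h := ae_iff.mpr (show μ {ω | ¬ ω ∉ NN} = 0 by simpa using hNNnull)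
    filter_upwards [h] with ω hω j haj'
    rw [hmemNN ω] at hω
    push_neg at hω
    exact lt_of_le_of_ne (hq1nn ω j) (Ne.symm (hω j haj'))
  -- integrability of coordinates
  have hajint : ∀ j, Integrable (fun ω => a ω j) μ := by
    intro j
    refine Integrable.mono' (integrable_const 1) (haj j).aestronglyMeasurable ?_
    filter_upwards with ω
    rw [Real.norm_eq_abs, abs_of_nonneg (ha0 ω j)]; exact ha1 ω j
  -- the set where some q1 coordinate vanishes is null
  have hSnull : ∀ j, μ {ω | q1 ω j = 0} = 0 := by
    intro j
    set T : Set (Fin C → ℝ) := {x | mtv M x j = 0} with hTdef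
    have hTmeas : MeasurableSet T :=
      (measurable_mtv_comp (Ωs := Fin C → ℝ) M measurable_id j) (measurableSet_singleton 0)
    have hSeq : {ω | q1 ω j = 0} = b ⁻¹' T := rfl
    rw [hSeq]
    have hSjmeas : MeasurableSet (b ⁻¹' T) := hb_meas hTmeas
    have hμSj : μ (b ⁻¹' T) ≠ ⊤ := measure_ne_top μ _
    -- a_j = 0 a.e. on the preimage
    have haeSj : ∀ᵐ ω ∂μ, ω ∈ b ⁻¹' T → a ω j = 0 := by
      filter_upwards [haeN] with ω hω hmem
      by_contra hne
      have hpos' : 0 < a ω j := lt_of_le_of_ne (ha0 ω j) (Ne.symm hne)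
      have : q1 ω j = 0 := hmem
      exact (hω j hpos').ne' this
    have hint0 : ∫ ω in b ⁻¹' T, a ω j ∂μ = 0 := by
      rw [setIntegral_congr_ae hSjmeas (haeSj.mono fun ω h hmem => h hmem)]
      simp
    have hcond0 : ∫ ω in b ⁻¹' T, q0 ω j ∂μ = 0 := by
      rw [← condexp_set_transfer μ hb_meas (hajint j) hTmeas (hcond j), hint0]
    have hge : δ * (μ (b ⁻¹' T)).toReal ≤ ∫ ω in b ⁻¹' T, q0 ω j ∂μ := by
      refine setIntegral_ge_of_const_le_real hSjmeas hμSj (fun ω _ => hq0ge ω j) ?_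
      refine Integrable.integrableOn ?_
      refine Integrable.mono' (integrable_const 1) (hq0m j).aestronglyMeasurable ?_
      filter_upwards with ω
      rw [Real.norm_eq_abs, abs_of_nonneg (hq0pos ω j).le]; exact hq0le ω j
    rw [hcond0] at hge
    have htr : (μ (b ⁻¹' T)).toReal = 0 := by
      nlinarith [ENNReal.toReal_nonneg (a := μ (b ⁻¹' T))]
    exact ((ENNReal.toReal_eq_zero_iff _).mp htr).resolve_right hμSj
  have haeS : ∀ᵐ ω ∂μ, ∀ j, 0 < q1 ω j := by
    rw [ae_all_iff]
    intro j
    have h := ae_iff.mpr (show μ {ω | ¬ q1 ω j ≠ 0} = 0 by simpa using hSnull j)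
    filter_upwards [h] with ω hω
    exact lt_of_le_of_ne (hq1nn ω j) (Ne.symm hω)
  -- G is a.e. nonnegative and integrable
  have haeG0 : ∀ᵐ ω ∂μ, 0 ≤ G ω := by
    filter_upwards [haeN] with ω hω
    have h := gibbs_nonneg (ha0 ω) (hq1nn ω) (fun j hj => hω j hj) (ha_simplex ω).2 (hq1sum ω)
    rwa [← klReal_eq_sum] at h
  have hgpt : ∀ᵐ ω ∂μ, klDiv (a ω) (q1 ω) = ENNReal.ofReal (G ω) := by
    filter_upwards [haeN] with ω hω
    refine klDiv_of_no_zero ?_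
    rintro ⟨j, hja, hjq⟩
    exact (hω j hja).ne' hjq
  have hGlint : ∫⁻ ω, ENNReal.ofReal (G ω) ∂μ ≠ ⊤ := by
    intro h
    apply htop
    rw [← h]
    exact lintegral_congr_ae hgpt
  have hGint : Integrable G μ := by
    refine ⟨hGmeas.aestronglyMeasurable, ?_⟩
    rw [hasFiniteIntegral_iff_norm]
    have heq : ∫⁻ ω, ENNReal.ofReal ‖G ω‖ ∂μ = ∫⁻ ω, ENNReal.ofReal (G ω) ∂μ := by
      refine lintegral_congr_ae ?_
      filter_upwards [haeG0] with ω hω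
      rw [Real.norm_eq_abs, abs_of_nonneg hω]
    rw [heq]
    exact lt_top_iff_ne_top.mpr hGlint
  have hlg : ∫⁻ ω, klDiv (a ω) (q1 ω) ∂μ = ENNReal.ofReal (∫ ω, G ω ∂μ) := by
    rw [ofReal_integral_eq_lintegral_ofReal hGint haeG0]
    exact lintegral_congr_ae hgpt
  -- the log-ratio functions
  set ψ : Fin C → (Fin C → ℝ) → ℝ :=
    fun j x => Real.log (mtv M0 x j) - Real.log (mtv M x j) with hψdef
  have hψm : ∀ j, Measurable (ψ j) := fun j =>
    ((Real.measurable_log.comp (measurable_mtv_comp (Ωs := Fin C → ℝ) M0 measurable_id j)).sub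
      (Real.measurable_log.comp (measurable_mtv_comp (Ωs := Fin C → ℝ) M measurable_id j)))
  -- integrability of a_j * L_j
  have hpart1 : ∀ j, Integrable (fun ω => a ω j * Real.log (q0 ω j)) μ := by
    intro j
    refine Integrable.mono' (integrable_const Blog) ((haj j).mul
      (Real.measurable_log.comp (hq0m j))).aestronglyMeasurable ?_
    filter_upwards with ω
    rw [Real.norm_eq_abs, abs_mul, abs_of_nonneg (ha0 ω j)]
    have hlq : Real.log δ ≤ Real.log (q0 ω j) := Real.log_le_log hδpos (hq0ge ω j)
    have hlq0 : Real.log (q0 ω j) ≤ 0 := Real.log_nonpos (hq0pos ω j).le (hq0le ω j)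
    have habs : |Real.log (q0 ω j)| ≤ Blog := by
      rw [abs_of_nonpos hlq0, hBdef]; linarith
    calc a ω j * |Real.log (q0 ω j)| ≤ 1 * |Real.log (q0 ω j)| :=
          mul_le_mul_of_nonneg_right (ha1 ω j) (abs_nonneg _)
      _ ≤ Blog := by rw [one_mul]; exact habs
  have hnnall : ∀ ω (k : Fin C), 0 ≤ a ω k * (-Real.log (q1 ω k)) := by
    intro ω k
    rcases eq_or_lt_of_le (hq1nn ω k) with h | h
    · rw [← h, Real.log_zero]; simp
    have := Real.log_nonpos h.le (hq1le ω k)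
    have := ha0 ω k
    nlinarith
  have hpart2 : ∀ j, Integrable (fun ω => a ω j * (-Real.log (q1 ω j))) μ := by
    intro j
    refine Integrable.mono' (hGint.add (integrable_const (C : ℝ)))
      ((haj j).mul (Real.measurable_log.comp (hq1m j)).neg).aestronglyMeasurable ?_
    filter_upwards [haeN] with ω hω
    rw [Real.norm_eq_abs, abs_of_nonneg (hnnall ω j)]
    -- bound by G ω + C
    have hGsum : (∑ k, a ω k * (-Real.log (q1 ω k))) ≤ G ω + C := by
      have hGrepr : G ω = ∑ k, (a ω k * Real.log (a ω k) + a ω k * (-Real.log (q1 ω k))) := by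
        rw [hGdef]
        show klReal (a ω) (q1 ω) = _
        rw [klReal_eq_sum]
        refine Finset.sum_congr rfl fun k _ => ?_
        rcases eq_or_lt_of_le (ha0 ω k) with h | h
        · rw [← h]; simp
        · rw [Real.log_div h.ne' (hω k h).ne']; ring
      have hent : ∀ k, -1 ≤ a ω k * Real.log (a ω k) := fun k =>
        mul_log_ge_neg_one (ha0 ω k) (ha1 ω k)
      have : ∑ k, a ω k * (-Real.log (q1 ω k))
          = G ω - ∑ k, a ω k * Real.log (a ω k) := by
        rw [hGrepr, Finset.sum_add_distrib]; ring
      rw [this]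
      have hsum : -(C:ℝ) ≤ ∑ k, a ω k * Real.log (a ω k) := by
        calc -(C:ℝ) = ∑ _k : Fin C, (-1 : ℝ) := by
              rw [Finset.sum_const, Finset.card_univ, Fintype.card_fin, nsmul_eq_mul]; ring
          _ ≤ _ := Finset.sum_le_sum fun k _ => hent k
      linarith
    calc a ω j * (-Real.log (q1 ω j)) ≤ ∑ k, a ω k * (-Real.log (q1 ω k)) := by
          refine Finset.single_le_sum (f := fun k => a ω k * (-Real.log (q1 ω k)))
            (fun k _ => hnnall ω k) (Finset.mem_univ j)
      _ ≤ G ω + C := hGsum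
  have hT1int : ∀ j, Integrable (fun ω => ψ j (b ω) * a ω j) μ := by
    intro j
    have heq : (fun ω => a ω j * Real.log (q0 ω j) + a ω j * (-Real.log (q1 ω j)))
        =ᵐ[μ] fun ω => ψ j (b ω) * a ω j := by
      filter_upwards with ω
      simp only [hψdef]
      ring
    exact ((hpart1 j).add (hpart2 j)).congr heq
  have htrans : ∀ j, Integrable (fun ω => ψ j (b ω) * q0 ω j) μ ∧
      ∫ ω, ψ j (b ω) * a ω j ∂μ = ∫ ω, ψ j (b ω) * q0 ω j ∂μ := fun j =>
    condexp_transfer μ hb_meas (hψm j) (hT1int j) (hajint j) (hcond j)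
  -- the population KL between q0 and q1
  set K : Ωs → ℝ := fun ω => ∑ j, ψ j (b ω) * q0 ω j with hKdef
  have hKint : Integrable K μ := integrable_finset_sum _ fun j _ => (htrans j).1
  have hKrepr : ∀ᵐ ω ∂μ, K ω = ∑ j, q0 ω j * Real.log (q0 ω j / q1 ω j) := by
    filter_upwards [haeS] with ω hω
    simp only [hKdef]
    refine Finset.sum_congr rfl fun j _ => ?_
    rw [Real.log_div (hq0pos ω j).ne' (hω j).ne', hψdef]
    ring
  have hK0 : ∀ᵐ ω ∂μ, 0 ≤ K ω := by
    filter_upwards [hKrepr, haeS] with ω hrep hω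
    rw [hrep]
    exact gibbs_nonneg (fun j => (hq0pos ω j).le) (fun j => (hω j).le)
      (fun j _ => hω j) (hq0sum ω) (hq1sum ω)
  -- G - F = Σ_j a_j ψ_j(b) a.e.
  have hGF : ∀ᵐ ω ∂μ, G ω - F ω = ∑ j, a ω j * ψ j (b ω) := by
    filter_upwards [haeN] with ω hω
    have hGs : G ω = ∑ j, (if a ω j = 0 then (0:ℝ) else a ω j * Real.log (a ω j / q1 ω j)) := rfl
    have hFs : F ω = ∑ j, (if a ω j = 0 then (0:ℝ) else a ω j * Real.log (a ω j / q0 ω j)) := rfl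
    rw [hGs, hFs, ← Finset.sum_sub_distrib]
    refine Finset.sum_congr rfl fun j _ => ?_
    rcases eq_or_lt_of_le (ha0 ω j) with h | h
    · simp [← h]
    · have hne : a ω j ≠ 0 := h.ne'
      rw [if_neg hne, if_neg hne, Real.log_div h.ne' (hω j h).ne',
        Real.log_div h.ne' (hq0pos ω j).ne', hψdef]
      ring
  -- integral bookkeeping
  have hsub : ∫ ω, (G ω - F ω) ∂μ = ∫ ω, G ω ∂μ - ∫ ω, F ω ∂μ := integral_sub hGint hFint
  have hchain : ∫ ω, (G ω - F ω) ∂μ = ∫ ω, K ω ∂μ := by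
    rw [integral_congr_ae hGF]
    rw [integral_finset_sum _ (fun j _ => ((hT1int j).congr (by
      filter_upwards with ω; ring)))]
    have hterm : ∀ j, ∫ ω, a ω j * ψ j (b ω) ∂μ = ∫ ω, ψ j (b ω) * q0 ω j ∂μ := by
      intro j
      rw [← (htrans j).2]
      refine integral_congr_ae ?_
      filter_upwards with ω; ring
    rw [Finset.sum_congr rfl fun j _ => hterm j, ← integral_finset_sum _
      (fun j _ => (htrans j).1)]
  have hIK0 : 0 ≤ ∫ ω, K ω ∂μ := integral_nonneg_of_ae hK0
  -- strict positivity of ∫ K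
  have hIKpos : 0 < ∫ ω, K ω ∂μ := by
    rcases lt_or_eq_of_le hIK0 with h | h
    · exact h
    exfalso
    have hK00 : K =ᵐ[μ] 0 := (integral_eq_zero_iff_of_nonneg_ae hK0 hKint).mp h.symm
    have haeEq : ∀ᵐ ω ∂μ, mtv M (b ω) = mtv M0 (b ω) := by
      filter_upwards [hK00, hKrepr, haeS] with ω h0 hrep hω
      have hsum0 : ∑ j, q0 ω j * Real.log (q0 ω j / q1 ω j) ≤ 0 := by
        rw [← hrep]; simp only [Pi.zero_apply] at h0; rw [h0]
      exact (gibbs_eq (fun j => (hq0pos ω j).le) (fun j => hω j)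
        (hq0sum ω) (hq1sum ω) hsum0).symm
    apply hMne
    refine matrix_eq_of_vertex hM hM0 ?_
    intro i ε hε
    have hA := hpos i ε hε
    set A : Set Ωs := {ω | 1 - ε ≤ b ω i} with hAdef
    set E : Set Ωs := {ω | mtv M (b ω) = mtv M0 (b ω)} with hEdef
    have hEc : μ {ω | ¬ mtv M (b ω) = mtv M0 (b ω)} = 0 := ae_iff.mp haeEq
    have hAE : μ (A ∩ E) ≠ 0 := by
      intro h0
      have h1 : μ A ≤ μ (A ∩ E) + μ (A \ E) := measure_le_inter_add_diff μ A E
      have h2 : μ (A \ E) = 0 := le_antisymm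
        ((measure_mono fun ω hω => hω.2).trans hEc.le) zero_le
      rw [h0, h2, zero_add] at h1
      exact hA.ne' (le_antisymm h1 zero_le)
    obtain ⟨ω, hωA, hωE⟩ := nonempty_of_measure_ne_zero hAE
    exact ⟨b ω, hb_simplex ω, hωA, hωE⟩
  -- conclusion
  have hIF0 : 0 ≤ ∫ ω, F ω ∂μ := integral_nonneg hF0
  have hIG : ∫ ω, G ω ∂μ = ∫ ω, F ω ∂μ + ∫ ω, K ω ∂μ := by
    rw [← hchain, hsub]; ring
  rw [hlf, hlg]
  rw [ENNReal.ofReal_lt_ofReal_iff (by linarith)]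
  linarith


end GBQL
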